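/- Let L be a finitely generated R-module and let φ : A → B be a minimal free presentation of L over R (so A and B are finitely generated free R-modules, Coker φ ≅ L, and Im φ ⊆ 𝔪B, Ker φ ⊆ 𝔪A). Then the second syzygy Ω²_R(L) = Ker φ decomposes as Ker φ = (Ker φ ∩ 𝔭A) ⊕ (Ker φ ∩ 𝔮A); the summand M = Ker φ ∩ 𝔭A is annihilated by 𝔮 (hence is an S-module) and the summand N = Ker φ ∩ 𝔮A is annihilated by 𝔭 (hence is a T-module). -/

import Mathlib

noncomputable section

variable {k : Type} [Field k] {S T : Type} [CommRing S] [CommRing T]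

/-- The fiber product `R = S ×_k T = {(s,t) | π_S(s) = π_T(t)}`, as a subring of `S × T`. -/
def fiberProd (piS : S →+* k) (piT : T →+* k) : Subring (S × T) :=
  RingHom.eqLocus (piS.comp (RingHom.fst S T)) (piT.comp (RingHom.snd S T))

/-- The projection `σ : S ×_k T → S`. -/
def fpFst (piS : S →+* k) (piT : T →+* k) : ↥(fiberProd piS piT) →+* S :=
  (RingHom.fst S T).comp (fiberProd piS piT).subtype

/-- The projection `τ : S ×_k T → T`. -/
def fpSnd (piS : S →+* k) (piT : T →+* k) : ↥(fiberProd piS piT) →+* T :=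
  (RingHom.snd S T).comp (fiberProd piS piT).subtype

/-- The canonical surjection `S ×_k T → k`. -/
def fpRes (piS : S →+* k) (piT : T →+* k) : ↥(fiberProd piS piT) →+* k :=
  piS.comp (fpFst piS piT)

/-- The ideal `𝔭 = 𝔭 × 0` of `R = S ×_k T` (the kernel of the projection `τ : R → T`). -/
def pIdeal (piS : S →+* k) (piT : T →+* k) : Ideal ↥(fiberProd piS piT) :=
  RingHom.ker (fpSnd piS piT)

/-- The ideal `𝔮 = 0 × 𝔮` of `R = S ×_k T` (the kernel of the projection `σ : R → S`). -/
def qIdeal (piS : S →+* k) (piT : T →+* k) : Ideal ↥(fiberProd piS piT) :=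
  RingHom.ker (fpFst piS piT)

/-- The maximal ideal `𝔪 = 𝔭 ⊕ 𝔮` of `R = S ×_k T` (the kernel of `R → k`). -/
def mIdeal (piS : S →+* k) (piT : T →+* k) : Ideal ↥(fiberProd piS piT) :=
  RingHom.ker (fpRes piS piT)


lemma coord_mem_of_mem_smul_top {R M ι : Type*} [CommRing R] [AddCommGroup M]
    [Module R M] (b : Module.Basis ι R M) (I : Ideal R) {x : M}
    (hx : x ∈ I • (⊤ : Submodule R M)) (i : ι) : b.repr x i ∈ I := by
  refine Submodule.smul_induction_on hx (fun r hr n _ => ?_) (fun y z hy hz => ?_)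
  · rw [map_smul, Finsupp.smul_apply, smul_eq_mul]
    exact I.mul_mem_right _ hr
  · rw [map_add, Finsupp.add_apply]
    exact I.add_mem hy hz

lemma smul_top_inf_smul_top {R M : Type*} [CommRing R] [AddCommGroup M] [Module R M]
    [Module.Free R M] {I J : Ideal R} (h : I ⊓ J = ⊥) :
    (I • ⊤ : Submodule R M) ⊓ (J • ⊤) = ⊥ := by
  rw [eq_bot_iff]
  rintro x ⟨hI, hJ⟩
  set b := Module.Free.chooseBasis R M
  have hrepr : b.repr x = 0 := by
    ext i
    have hmem : b.repr x i ∈ I ⊓ J :=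
      ⟨coord_mem_of_mem_smul_top b I hI i, coord_mem_of_mem_smul_top b J hJ i⟩
    rw [h] at hmem
    simpa using hmem
  have : x = 0 := by simpa using congrArg b.repr.symm hrepr
  simp [this]

lemma smul_smul_top_eq_zero {R M : Type*} [CommRing R] [AddCommGroup M] [Module R M]
    {I J : Ideal R} (h : ∀ a ∈ I, ∀ b ∈ J, a * b = 0) {a : R} (ha : a ∈ I)
    {x : M} (hx : x ∈ J • (⊤ : Submodule R M)) : a • x = 0 := by
  refine Submodule.smul_induction_on hx (fun r hr n _ => ?_) (fun y z hy hz => ?_)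
  · rw [smul_smul, h a ha r hr, zero_smul]
  · rw [smul_add, hy, hz, add_zero]

lemma pq_inf (piS : S →+* k) (piT : T →+* k) : pIdeal piS piT ⊓ qIdeal piS piT = ⊥ := by
  rw [eq_bot_iff]
  rintro r ⟨hp, hq⟩
  have h1 : (r : S × T).1 = 0 := hq
  have h2 : (r : S × T).2 = 0 := hp
  ext
  · simpa using h1
  · simpa using h2

lemma qp_mul (piS : S →+* k) (piT : T →+* k) :
    ∀ a ∈ qIdeal piS piT, ∀ b ∈ pIdeal piS piT, a * b = 0 := by
  intro a ha b hb
  have h1 : (a : S × T).1 = 0 := ha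
  have h2 : (b : S × T).2 = 0 := hb
  ext
  · show (a : S × T).1 * (b : S × T).1 = 0
    rw [h1, zero_mul]
  · show (a : S × T).2 * (b : S × T).2 = 0
    rw [h2, mul_zero]

lemma m_le_sup (piS : S →+* k) (piT : T →+* k) :
    mIdeal piS piT ≤ pIdeal piS piT ⊔ qIdeal piS piT := by
  intro r hr
  have hr1 : piS (r : S × T).1 = 0 := hr
  have hr2 : piT (r : S × T).2 = 0 := by
    have hp : piS (r : S × T).1 = piT (r : S × T).2 := r.property
    rw [← hp]; exact hr1
  refine Submodule.mem_sup.mpr ⟨⟨((r : S × T).1, 0), ?_⟩, ?_, ⟨(0, (r : S × T).2), ?_⟩, ?_, ?_⟩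
  · show piS (r : S × T).1 = piT 0
    rw [map_zero, hr1]
  · show (0 : T) = 0
    rfl
  · show piS 0 = piT (r : S × T).2
    rw [map_zero, hr2]
  · show (0 : S) = 0
    rfl
  · ext <;> simp

/-- **Proposition (Dress–Krämer; Prop. 4 in Moore, "Cohomology over fiber products of local
rings")**.  Let `R = S ×_k T` and let `φ : A → B` be a minimal free presentation of a
finitely generated `R`-module `L` (so `A, B` are finitely generated free `R`-modules,
`Coker φ ≅ L`, `Im φ ⊆ 𝔪B` and `Ker φ ⊆ 𝔪A`).  Then the second syzygy
`Ω²_R(L) = Ker φ` decomposes as `Ker φ = (Ker φ ∩ 𝔭A) ⊕ (Ker φ ∩ 𝔮A)`, where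
`M = Ker φ ∩ 𝔭A` is annihilated by `𝔮` (hence is an `S`-module) and `N = Ker φ ∩ 𝔮A` is
annihilated by `𝔭` (hence is a `T`-module). -/
theorem syzygy_decomposition_fiberProd
    (piS : S →+* k) (piT : T →+* k)
    [IsNoetherianRing S] [IsNoetherianRing T] [IsLocalRing S] [IsLocalRing T]
    (hSsurj : Function.Surjective piS) (hTsurj : Function.Surjective piT)
    (hSker : RingHom.ker piS = IsLocalRing.maximalIdeal S)
    (hTker : RingHom.ker piT = IsLocalRing.maximalIdeal T)
    (L A B : Type) [AddCommGroup L] [Module ↥(fiberProd piS piT) L]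
    [Module.Finite ↥(fiberProd piS piT) L]
    [AddCommGroup A] [Module ↥(fiberProd piS piT) A]
    [Module.Free ↥(fiberProd piS piT) A] [Module.Finite ↥(fiberProd piS piT) A]
    [AddCommGroup B] [Module ↥(fiberProd piS piT) B]
    [Module.Free ↥(fiberProd piS piT) B] [Module.Finite ↥(fiberProd piS piT) B]
    (φ : A →ₗ[↥(fiberProd piS piT)] B)
    (coker : (B ⧸ LinearMap.range φ) ≃ₗ[↥(fiberProd piS piT)] L)
    (hmin₁ : LinearMap.range φ ≤ mIdeal piS piT • (⊤ : Submodule ↥(fiberProd piS piT) B))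
    (hmin₂ : LinearMap.ker φ ≤ mIdeal piS piT • (⊤ : Submodule ↥(fiberProd piS piT) A)) :
    LinearMap.ker φ =
        (LinearMap.ker φ ⊓ pIdeal piS piT • (⊤ : Submodule ↥(fiberProd piS piT) A)) ⊔
          (LinearMap.ker φ ⊓ qIdeal piS piT • (⊤ : Submodule ↥(fiberProd piS piT) A)) ∧
      Disjoint
        (LinearMap.ker φ ⊓ pIdeal piS piT • (⊤ : Submodule ↥(fiberProd piS piT) A))
        (LinearMap.ker φ ⊓ qIdeal piS piT • (⊤ : Submodule ↥(fiberProd piS piT) A)) ∧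
      (∀ q ∈ qIdeal piS piT,
        ∀ x ∈ LinearMap.ker φ ⊓ pIdeal piS piT • (⊤ : Submodule ↥(fiberProd piS piT) A),
          q • x = 0) ∧
      (∀ p ∈ pIdeal piS piT,
        ∀ y ∈ LinearMap.ker φ ⊓ qIdeal piS piT • (⊤ : Submodule ↥(fiberProd piS piT) A),
          p • y = 0) := by
  set R := ↥(fiberProd piS piT)
  have pqbot : (pIdeal piS piT • (⊤ : Submodule R A)) ⊓ (qIdeal piS piT • ⊤) = ⊥ :=
    smul_top_inf_smul_top (pq_inf piS piT)
  have pqbotB : (pIdeal piS piT • (⊤ : Submodule R B)) ⊓ (qIdeal piS piT • ⊤) = ⊥ :=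
    smul_top_inf_smul_top (pq_inf piS piT)
  have hmap : ∀ (I : Ideal R) (u : A), u ∈ I • (⊤ : Submodule R A) →
      φ u ∈ I • (⊤ : Submodule R B) := by
    intro I u hu
    have h1 : φ u ∈ Submodule.map φ (I • ⊤) := Submodule.mem_map_of_mem hu
    rw [Submodule.map_smul''] at h1
    exact Submodule.smul_mono le_rfl le_top h1
  refine ⟨?_, ?_, ?_, ?_⟩
  · refine le_antisymm ?_ (sup_le inf_le_left inf_le_left)
    intro x hx
    have hxm : x ∈ mIdeal piS piT • (⊤ : Submodule R A) := hmin₂ hx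
    have hsupmem : x ∈ (pIdeal piS piT • (⊤ : Submodule R A)) ⊔ (qIdeal piS piT • ⊤) := by
      have h1 : mIdeal piS piT • (⊤ : Submodule R A) ≤
          (pIdeal piS piT ⊔ qIdeal piS piT) • ⊤ :=
        Submodule.smul_mono_left (m_le_sup piS piT)
      rw [Submodule.sup_smul] at h1
      exact h1 hxm
    obtain ⟨u, hu, v, hv, huv⟩ := Submodule.mem_sup.mp hsupmem
    have hφu : φ u ∈ pIdeal piS piT • (⊤ : Submodule R B) := hmap _ _ hu
    have hφv : φ v ∈ qIdeal piS piT • (⊤ : Submodule R B) := hmap _ _ hv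
    have hsum : φ u + φ v = 0 := by
      rw [← map_add, huv]
      exact LinearMap.mem_ker.mp hx
    have hφu0 : φ u = 0 := by
      have hmem : φ u ∈ (pIdeal piS piT • (⊤ : Submodule R B)) ⊓ (qIdeal piS piT • ⊤) := by
        refine ⟨hφu, ?_⟩
        rw [eq_neg_of_add_eq_zero_left hsum]
        exact Submodule.neg_mem _ hφv
      rw [pqbotB] at hmem
      simpa using hmem
    have hφv0 : φ v = 0 := by
      have := hsum
      rw [hφu0, zero_add] at this
      exact this
    exact Submodule.mem_sup.mpr
      ⟨u, ⟨LinearMap.mem_ker.mpr hφu0, hu⟩, v, ⟨LinearMap.mem_ker.mpr hφv0, hv⟩, huv⟩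
  · exact Disjoint.mono inf_le_right inf_le_right (disjoint_iff.mpr pqbot)
  · intro q hq x hx
    exact smul_smul_top_eq_zero (qp_mul piS piT) hq hx.2
  · intro p hp y hy
    have hmul : ∀ a ∈ pIdeal piS piT, ∀ b ∈ qIdeal piS piT, a * b = 0 := by
      intro a ha b hb
      rw [mul_comm]
      exact qp_mul piS piT b hb a ha
    exact smul_smul_top_eq_zero hmul hp hy.2
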